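/- Let V be a finite-dimensional complex vector space and X₁,…,X_κ : V → V pairwise commuting linear maps. Then for every λ ∈ ℂ^κ the following are equivalent: (a) λ is a joint eigenvalue of (X₁,…,X_κ), i.e. there exists v ∈ V, v ≠ 0, with X_k v = λ_k v for all k; (b) the Koszul complex of (X₁−λ₁,…,X_κ−λ_κ) fails to be exact, i.e. ker d_{X−λ} ≠ ran d_{X−λ} inside V ⊗ ⋀(ℂ^κ). In other words, the Taylor spectrum of the commuting tuple (X₁,…,X_κ) on V equals exactly the set of its joint eigenvalues. -/

import Mathlib

open TensorProduct

/-- `VΛ := V ⊗ ⋀(ℂ^κ)`, the tensor product of `V` with the exterior algebra of `ℂ^κ`. -/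
noncomputable abbrev VLambda (κ : ℕ) (V : Type*) [AddCommGroup V] [Module ℂ V] :=
  TensorProduct ℂ V (ExteriorAlgebra ℂ (Fin κ → ℂ))

/-- The Koszul differential `d_X` on `V ⊗ ⋀(ℂ^κ)`, determined by
`d_X (u ⊗ ω) = Σ_k (X_k u) ⊗ (e_k ∧ ω)`. -/
noncomputable def koszulD {κ : ℕ} {V : Type*} [AddCommGroup V] [Module ℂ V]
    (X : Fin κ → Module.End ℂ V) :
    VLambda κ V →ₗ[ℂ] VLambda κ V :=
  ∑ k : Fin κ, TensorProduct.map (X k)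
    (LinearMap.mulLeft ℂ (ExteriorAlgebra.ι ℂ (Pi.single k (1 : ℂ))))

namespace TaylorAux

variable {κ : ℕ} {V : Type*} [AddCommGroup V] [Module ℂ V]

/-- contraction with the `k`-th dual basis vector -/
noncomputable def ctr (k : Fin κ) :
    Module.End ℂ (ExteriorAlgebra ℂ (Fin κ → ℂ)) :=
  CliffordAlgebra.contractLeft (LinearMap.proj k)

lemma koszulD_tmul (Y : Fin κ → Module.End ℂ V) (u : V) (ω : ExteriorAlgebra ℂ (Fin κ → ℂ)) :
    koszulD Y (u ⊗ₜ[ℂ] ω)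
      = ∑ k : Fin κ, (Y k u) ⊗ₜ[ℂ] (ExteriorAlgebra.ι ℂ (Pi.single k (1 : ℂ)) * ω) := by
  simp [koszulD, LinearMap.sum_apply]

lemma anticomm (k l : Fin κ) (ω : ExteriorAlgebra ℂ (Fin κ → ℂ)) :
    ExteriorAlgebra.ι ℂ (Pi.single k (1 : ℂ)) * (ctr l ω)
      + ctr l (ExteriorAlgebra.ι ℂ (Pi.single k (1 : ℂ)) * ω)
      = (if k = l then (1:ℂ) else 0) • ω := by
  rw [ctr, CliffordAlgebra.contractLeft_ι_mul]
  have : (LinearMap.proj l : (Fin κ → ℂ) →ₗ[ℂ] ℂ) (Pi.single k (1:ℂ))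
      = (if k = l then (1:ℂ) else 0) := by
    simp [Pi.single_apply, eq_comm]
  rw [this]
  abel

lemma dd_eq_zero (Y : Fin κ → Module.End ℂ V) (hc : ∀ i j, Commute (Y i) (Y j)) :
    ∀ x, koszulD Y (koszulD Y x) = 0 := by
  suffices h : (koszulD Y) ∘ₗ (koszulD Y) = 0 by
    intro x; exact DFunLike.congr_fun h x
  apply TensorProduct.ext'
  intro u ω
  simp only [LinearMap.comp_apply, LinearMap.zero_apply]
  rw [koszulD_tmul, map_sum]
  have hterm : ∀ k : Fin κ, koszulD Y ((Y k u) ⊗ₜ[ℂ] (ExteriorAlgebra.ι ℂ (Pi.single k (1 : ℂ)) * ω))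
      = ∑ l : Fin κ, (Y l (Y k u)) ⊗ₜ[ℂ]
        (ExteriorAlgebra.ι ℂ (Pi.single l (1 : ℂ)) * (ExteriorAlgebra.ι ℂ (Pi.single k (1 : ℂ)) * ω)) :=
    fun k => koszulD_tmul Y _ _
  simp_rw [hterm]
  -- now show the double sum vanishes
  set f : Fin κ → Fin κ → VLambda κ V := fun k l =>
    (Y l (Y k u)) ⊗ₜ[ℂ]
      (ExteriorAlgebra.ι ℂ (Pi.single l (1 : ℂ)) * (ExteriorAlgebra.ι ℂ (Pi.single k (1 : ℂ)) * ω))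
    with hf
  have key : ∀ k l, f k l + f l k = 0 := by
    intro k l
    have hY : Y l (Y k u) = Y k (Y l u) := by
      have := hc l k
      calc Y l (Y k u) = (Y l * Y k) u := rfl
        _ = (Y k * Y l) u := by rw [this]
        _ = Y k (Y l u) := rfl
    rw [hf]
    simp only []
    rw [hY, ← TensorProduct.tmul_add]
    have : ExteriorAlgebra.ι ℂ (Pi.single l (1 : ℂ)) * (ExteriorAlgebra.ι ℂ (Pi.single k (1 : ℂ)) * ω)
        + ExteriorAlgebra.ι ℂ (Pi.single k (1 : ℂ)) * (ExteriorAlgebra.ι ℂ (Pi.single l (1 : ℂ)) * ω)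
        = (ExteriorAlgebra.ι ℂ (Pi.single l (1 : ℂ)) * ExteriorAlgebra.ι ℂ (Pi.single k (1 : ℂ))
          + ExteriorAlgebra.ι ℂ (Pi.single k (1 : ℂ)) * ExteriorAlgebra.ι ℂ (Pi.single l (1 : ℂ))) * ω := by
      rw [add_mul, mul_assoc, mul_assoc]
    rw [this, ExteriorAlgebra.ι_add_mul_swap, zero_mul, TensorProduct.tmul_zero]
  have h2 : (∑ k : Fin κ, ∑ l : Fin κ, f k l) + (∑ k : Fin κ, ∑ l : Fin κ, f k l) = 0 := by
    nth_rewrite 2 [Finset.sum_comm]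
    rw [← Finset.sum_add_distrib]
    refine Finset.sum_eq_zero fun k _ => ?_
    rw [← Finset.sum_add_distrib]
    exact Finset.sum_eq_zero fun l _ => key k l
  have := congrArg (fun z => ((2:ℂ)⁻¹) • z) (two_smul ℂ (∑ k : Fin κ, ∑ l : Fin κ, f k l) ▸ h2)
  -- simpler: from x + x = 0 in a ℂ-module conclude x = 0
  have h3 : (2:ℂ) • (∑ k : Fin κ, ∑ l : Fin κ, f k l) = 0 := by
    rw [two_smul]; exact h2
  have h4 := congrArg (fun z => ((2:ℂ)⁻¹) • z) h3
  simpa [smul_smul] using h4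



lemma ker_eq_range (Y a : Fin κ → Module.End ℂ V)
    (hc : ∀ i j, Commute (Y i) (Y j))
    (hca : ∀ k l, Commute (a k) (Y l))
    (hsum : ∑ k, a k * Y k = 1) :
    LinearMap.ker (koszulD Y) = LinearMap.range (koszulD Y) := by
  set s : VLambda κ V →ₗ[ℂ] VLambda κ V :=
    ∑ l : Fin κ, TensorProduct.map (a l) (ctr l) with hs
  have hsapp : ∀ (u : V) (ω), s (u ⊗ₜ[ℂ] ω) = ∑ l : Fin κ, (a l u) ⊗ₜ[ℂ] (ctr l ω) := by
    intro u ω; simp [hs, LinearMap.sum_apply]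
  have hom : ∀ x, koszulD Y (s x) + s (koszulD Y x) = x := by
    suffices h : (koszulD Y) ∘ₗ s + s ∘ₗ (koszulD Y) = LinearMap.id by
      intro x
      have := DFunLike.congr_fun h x
      simpa using this
    apply TensorProduct.ext'
    intro u ω
    simp only [LinearMap.add_apply, LinearMap.comp_apply, LinearMap.id_apply]
    rw [hsapp, koszulD_tmul, map_sum, map_sum]
    have h1 : ∀ l : Fin κ, koszulD Y ((a l u) ⊗ₜ[ℂ] (ctr l ω))
        = ∑ k : Fin κ, (Y k (a l u)) ⊗ₜ[ℂ]
            (ExteriorAlgebra.ι ℂ (Pi.single k (1 : ℂ)) * (ctr l ω)) :=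
      fun l => koszulD_tmul Y _ _
    have h2 : ∀ k : Fin κ,
        s ((Y k u) ⊗ₜ[ℂ] (ExteriorAlgebra.ι ℂ (Pi.single k (1 : ℂ)) * ω))
        = ∑ l : Fin κ, (a l (Y k u)) ⊗ₜ[ℂ]
            (ctr l (ExteriorAlgebra.ι ℂ (Pi.single k (1 : ℂ)) * ω)) :=
      fun k => hsapp _ _
    simp_rw [h1, h2]
    rw [show (∑ k : Fin κ, ∑ l : Fin κ, (a l (Y k u)) ⊗ₜ[ℂ]
          (ctr l (ExteriorAlgebra.ι ℂ (Pi.single k (1 : ℂ)) * ω)))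
        = ∑ l : Fin κ, ∑ k : Fin κ, (a l (Y k u)) ⊗ₜ[ℂ]
          (ctr l (ExteriorAlgebra.ι ℂ (Pi.single k (1 : ℂ)) * ω)) from Finset.sum_comm]
    rw [← Finset.sum_add_distrib]
    have hY : ∀ k l, Y k (a l u) = a l (Y k u) := by
      intro k l
      calc Y k (a l u) = (Y k * a l) u := rfl
        _ = (a l * Y k) u := by rw [(hca l k).symm.eq]
        _ = a l (Y k u) := rfl
    have hstep : ∀ l : Fin κ,
        (∑ k : Fin κ, (Y k (a l u)) ⊗ₜ[ℂ]
            (ExteriorAlgebra.ι ℂ (Pi.single k (1 : ℂ)) * (ctr l ω)))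
        + (∑ k : Fin κ, (a l (Y k u)) ⊗ₜ[ℂ]
            (ctr l (ExteriorAlgebra.ι ℂ (Pi.single k (1 : ℂ)) * ω)))
        = ∑ k : Fin κ, (if k = l then ((a l * Y k) u) ⊗ₜ[ℂ] ω else 0) := by
      intro l
      rw [← Finset.sum_add_distrib]
      refine Finset.sum_congr rfl fun k _ => ?_
      rw [hY, ← TensorProduct.tmul_add, anticomm]
      by_cases hkl : k = l
      · simp [hkl, Module.End.mul_apply]
      · simp [hkl]
    refine Eq.trans (Finset.sum_congr rfl fun l _ => hstep l) ?_
    have hcollapse : ∀ l : Fin κ,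
        (∑ k : Fin κ, if k = l then ((a l * Y k) u) ⊗ₜ[ℂ] ω else 0)
          = ((a l * Y l) u) ⊗ₜ[ℂ] ω := by
      intro l; simp
    rw [Finset.sum_congr rfl fun l _ => hcollapse l, ← TensorProduct.sum_tmul,
      ← LinearMap.sum_apply, hsum, Module.End.one_apply]
  apply le_antisymm
  · intro x hx
    refine ⟨s x, ?_⟩
    have h := hom x
    rw [LinearMap.mem_ker.mp hx, map_zero, add_zero] at h
    exact h
  · rintro _ ⟨y, rfl⟩
    exact LinearMap.mem_ker.mpr (dd_eq_zero Y hc y)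




/-- Commuting operators, all nilpotent on an invariant nonzero submodule `p`,
have a common kernel vector in `p`. -/
lemma common_kernel : ∀ (n : ℕ) (Y : Fin n → Module.End ℂ V),
    (∀ i j, Commute (Y i) (Y j)) → ∀ (p : Submodule ℂ V), p ≠ ⊥ →
    (∀ i, ∀ v ∈ p, Y i v ∈ p) → (∀ i, ∃ m : ℕ, ∀ v ∈ p, (Y i ^ m) v = 0) →
    ∃ v ∈ p, v ≠ 0 ∧ ∀ i, Y i v = 0 := by
  intro n
  induction n with
  | zero =>
    intro Y _ p hp _ _
    obtain ⟨v, hvp, hv⟩ := Submodule.exists_mem_ne_zero_of_ne_bot hp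
    exact ⟨v, hvp, hv, fun i => i.elim0⟩
  | succ n ih =>
    intro Y hc p hp hinv hnil
    classical
    set g := Y (Fin.last n) with hg
    have hpowinv : ∀ (t : ℕ) (v), v ∈ p → (g ^ t) v ∈ p := by
      intro t
      induction t with
      | zero => intro v hv; simpa using hv
      | succ t iht =>
        intro v hv
        rw [pow_succ', Module.End.mul_apply]
        exact hinv _ _ (iht v hv)
    -- the kernel of g within p is nonzero
    obtain ⟨v, hvp, hv⟩ := Submodule.exists_mem_ne_zero_of_ne_bot hp
    obtain ⟨m, hm⟩ := hnil (Fin.last n)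
    have hex : ∃ j : ℕ, (g ^ j) v = 0 := ⟨m, hm v hvp⟩
    set j := Nat.find hex with hj
    have hjne : j ≠ 0 := by
      intro h0
      have := Nat.find_spec hex
      rw [← hj, h0] at this
      simp at this
      exact hv this
    set w := (g ^ (j - 1)) v with hw
    have hwp : w ∈ p := hpowinv _ _ hvp
    have hwne : w ≠ 0 := Nat.find_min hex (Nat.sub_lt (Nat.pos_of_ne_zero hjne) one_pos)
    have hgw : g w = 0 := by
      have : (g ^ j) v = 0 := Nat.find_spec hex
      rw [hw, ← Module.End.mul_apply, ← pow_succ']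
      rwa [Nat.sub_add_cancel (Nat.one_le_iff_ne_zero.mpr hjne)]
    set q : Submodule ℂ V := p ⊓ LinearMap.ker g with hq
    have hqne : q ≠ ⊥ := by
      intro h
      have : w ∈ q := ⟨hwp, LinearMap.mem_ker.mpr hgw⟩
      rw [h] at this
      exact hwne (Submodule.mem_bot ℂ |>.mp this)
    obtain ⟨u, hup, hune, hukills⟩ :=
      ih (fun i => Y i.castSucc) (fun i j => hc _ _) q hqne
        (by
          rintro i u ⟨hup, huk⟩
          refine ⟨hinv _ _ hup, LinearMap.mem_ker.mpr ?_⟩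
          have : g (Y i.castSucc u) = Y i.castSucc (g u) := by
            have h := (hc (Fin.last n) i.castSucc)
            calc g (Y i.castSucc u) = (g * Y i.castSucc) u := rfl
              _ = (Y i.castSucc * g) u := by rw [h.eq]
              _ = Y i.castSucc (g u) := rfl
          rw [this, LinearMap.mem_ker.mp huk, map_zero])
        (fun i => by
          obtain ⟨m, hm⟩ := hnil i.castSucc
          exact ⟨m, fun v hv => hm v hv.1⟩)
    refine ⟨u, hup.1, hune, fun i => ?_⟩
    refine Fin.lastCases ?_ (fun i => hukills i) i
    exact LinearMap.mem_ker.mp hup.2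




lemma exists_combo [FiniteDimensional ℂ V] (Y : Fin κ → Module.End ℂ V)
    (hc : ∀ i j, Commute (Y i) (Y j))
    (h : ¬ ∃ v : V, v ≠ 0 ∧ ∀ k, Y k v = 0) :
    ∃ a : Fin κ → Module.End ℂ V, (∀ k l, Commute (a k) (Y l)) ∧ ∑ k, a k * Y k = 1 := by
  classical
  -- invariance of the joint generalized eigenspaces
  have hmaps : ∀ (χ : Fin κ → ℂ) (l : Fin κ), ∀ v ∈ (⨅ i, (Y i).maxGenEigenspace (χ i)),
      Y l v ∈ ⨅ i, (Y i).maxGenEigenspace (χ i) := by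
    intro χ l v hv
    rw [Submodule.mem_iInf] at hv ⊢
    intro i
    exact Module.End.mapsTo_maxGenEigenspace_of_comm (hc i l) (χ i) (hv i)
  -- construction of approximate inverses
  have hb : ∀ (χ : Fin κ → ℂ) (k : Fin κ), χ k ≠ 0 →
      ∃ b : Module.End ℂ V, (∀ l, Commute b (Y l)) ∧
        (∀ v ∈ (⨅ i, (Y i).maxGenEigenspace (χ i)),
          ((1 : Module.End ℂ V) - b * Y k) v = 0) ∧
        (∀ (p : Submodule ℂ V), (∀ v ∈ p, Y k v ∈ p) → ∀ v ∈ p, b v ∈ p) := by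
    intro χ k hk
    set c := χ k with hcdef
    set N : Module.End ℂ V := 1 - c⁻¹ • Y k with hN
    set nn := Module.finrank ℂ V with hnn
    have hNc : ∀ l, Commute N (Y l) :=
      fun l => (Commute.one_left (Y l)).sub_left ((hc k l).smul_left c⁻¹)
    refine ⟨c⁻¹ • ∑ j ∈ Finset.range nn, N ^ j, fun l => ?_, ?_, ?_⟩
    · exact (Commute.sum_left _ _ _ (fun j _ => (hNc l).pow_left j)).smul_left c⁻¹
    · -- 1 - b * Y k = N ^ nn  kills the joint generalized eigenspace
      have hbY : (c⁻¹ • ∑ j ∈ Finset.range nn, N ^ j) * Y k = 1 - N ^ nn := by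
        have h1 : (c⁻¹ • Y k : Module.End ℂ V) = 1 - N := by rw [hN]; abel
        calc (c⁻¹ • ∑ j ∈ Finset.range nn, N ^ j) * Y k
            = (∑ j ∈ Finset.range nn, N ^ j) * (c⁻¹ • Y k) := by
              rw [smul_mul_assoc, mul_smul_comm]
          _ = (∑ j ∈ Finset.range nn, N ^ j) * (1 - N) := by rw [h1]
          _ = -((∑ j ∈ Finset.range nn, N ^ j) * (N - 1)) := by rw [← mul_neg, neg_sub]
          _ = 1 - N ^ nn := by rw [geom_sum_mul, neg_sub]
      intro v hv
      have hvk : v ∈ (Y k).maxGenEigenspace c := by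
        have := Submodule.mem_iInf _ |>.mp hv k
        exact this
      have hvfin : ((Y k - c • 1) ^ nn) v = 0 := by
        have hle := Module.End.genEigenspace_le_genEigenspace_finrank (Y k) c ⊤
        have := hle hvk
        rw [Module.End.mem_genEigenspace_nat] at this
        exact this
      have hNn : (N : Module.End ℂ V) = (-c⁻¹) • (Y k - c • 1) := by
        rw [hN, smul_sub, smul_smul, neg_mul, inv_mul_cancel₀ hk]
        simp only [neg_smul, one_smul, sub_neg_eq_add]
        abel
      have : ((1 : Module.End ℂ V) - (c⁻¹ • ∑ j ∈ Finset.range nn, N ^ j) * Y k) v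
          = (N ^ nn) v := by rw [hbY]; simp
      rw [this, hNn, smul_pow, LinearMap.smul_apply, hvfin, smul_zero]
    · -- invariance
      intro p hp v hv
      have hNp : ∀ (j : ℕ) (v), v ∈ p → (N ^ j) v ∈ p := by
        intro j
        induction j with
        | zero => intro v hv; simpa using hv
        | succ j ihj =>
          intro v hv
          rw [pow_succ', Module.End.mul_apply]
          have hNv : ∀ w ∈ p, N w ∈ p := by
            intro w hw
            rw [hN]
            simp only [LinearMap.sub_apply, Module.End.one_apply, LinearMap.smul_apply]
            exact p.sub_mem hw (p.smul_mem _ (hp w hw))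
          exact hNv _ (ihj v hv)
      simp only [LinearMap.smul_apply, LinearMap.sum_apply]
      exact p.smul_mem _ (Submodule.sum_mem p fun j _ => hNp j v hv)
  -- the joint generalized eigenspace at 0 is trivial
  have hV0 : (⨅ i, (Y i).maxGenEigenspace ((0 : Fin κ → ℂ) i)) = ⊥ := by
    by_contra h0
    obtain ⟨v, hvp, hvne, hvk⟩ := common_kernel κ Y hc _ h0
      (fun i v hv => hmaps 0 i v hv)
      (fun i => ⟨Module.finrank ℂ V, fun v hv => by
        have hvi := Submodule.mem_iInf _ |>.mp hv i
        have hle := Module.End.genEigenspace_le_genEigenspace_finrank (Y i) 0 ⊤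
        have := hle hvi
        rw [Module.End.mem_genEigenspace_nat] at this
        simpa using this⟩)
    exact h ⟨v, hvne, hvk⟩
  -- gluing over a finite set of characters
  have glue : ∀ (S : Finset (Fin κ → ℂ)), (∀ χ ∈ S, ∃ k, χ k ≠ 0) →
      ∃ a : Fin κ → Module.End ℂ V, (∀ k l, Commute (a k) (Y l)) ∧
        ∀ χ ∈ S, ∀ v ∈ (⨅ i, (Y i).maxGenEigenspace (χ i)),
          ((1 : Module.End ℂ V) - ∑ k, a k * Y k) v = 0 := by
    intro S
    induction S using Finset.induction_on with
    | empty =>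
      exact fun _ => ⟨0, fun k l => Commute.zero_left _, fun χ hχ => absurd hχ (by simp)⟩
    | @insert χ S hχS ih =>
      intro hS
      obtain ⟨a, hacomm, havan⟩ := ih (fun χ' hχ' => hS χ' (Finset.mem_insert_of_mem hχ'))
      obtain ⟨k, hk⟩ := hS χ (Finset.mem_insert_self χ S)
      obtain ⟨b, hbcomm, hbvan, hbclos⟩ := hb χ k hk
      set z : Module.End ℂ V := 1 - b * Y k with hz
      have hzY : ∀ m, Commute z (Y m) :=
        fun m => (Commute.one_left _).sub_left ((hbcomm m).mul_left (hc k m))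
      refine ⟨fun l => a l * z + if l = k then b else 0, ?_, ?_⟩
      · intro l m
        refine ((hacomm l m).mul_left (hzY m)).add_left ?_
        by_cases hlk : l = k
        · simpa [hlk] using hbcomm m
        · simp [hlk]
      · have hsum' : ∑ l : Fin κ, (a l * z + if l = k then b else 0) * Y l
            = (∑ l : Fin κ, a l * Y l) * z + b * Y k := by
          have hptwise : ∀ l : Fin κ, (a l * z + if l = k then b else 0) * Y l
              = a l * Y l * z + (if l = k then b * Y l else 0) := by
            intro l
            rw [add_mul, ite_mul, zero_mul, mul_assoc, (hzY l).eq, ← mul_assoc]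
          simp_rw [hptwise]
          rw [Finset.sum_add_distrib, ← Finset.sum_mul, Finset.sum_ite_eq' Finset.univ k]
          simp
        have hfact : (1 : Module.End ℂ V)
            - ∑ l : Fin κ, (a l * z + if l = k then b else 0) * Y l
            = (1 - ∑ l : Fin κ, a l * Y l) * z := by
          rw [hsum', hz]
          noncomm_ring
        intro χ' hχ' v hv
        rw [hfact]
        rw [Module.End.mul_apply]
        rcases Finset.mem_insert.mp hχ' with rfl | hχ'S
        · rw [hbvan v hv]
          · simp
        · have hzv : z v ∈ ⨅ i, (Y i).maxGenEigenspace (χ' i) := by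
            rw [hz]
            simp only [LinearMap.sub_apply, Module.End.one_apply, Module.End.mul_apply]
            exact Submodule.sub_mem _ hv
              (hbclos _ (fun w hw => hmaps χ' k w hw) _ (hmaps χ' k v hv))
          exact havan χ' hχ'S _ hzv
  -- assemble
  have htop : ⨆ χ : Fin κ → ℂ, ⨅ i, (Y i).maxGenEigenspace (χ i) = ⊤ :=
    Module.End.iSup_iInf_maxGenEigenspace_eq_top_of_iSup_maxGenEigenspace_eq_top_of_commute Y
      (fun i j _ => hc i j) (fun i => Module.End.iSup_maxGenEigenspace_eq_top (Y i))
  have hcomp : IsCompactElement (⊤ : Submodule ℂ V) :=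
    (Submodule.fg_iff_compact _).mp (Module.finite_def.mp inferInstance)
  obtain ⟨S, hS⟩ := CompleteLattice.IsCompactElement.exists_finset_of_le_iSup _ hcomp
    (fun χ : Fin κ → ℂ => ⨅ i, (Y i).maxGenEigenspace (χ i)) (le_of_eq htop.symm)
  set S' := S.filter (fun χ => ⨅ i, (Y i).maxGenEigenspace (χ i) ≠ ⊥) with hS'def
  have hSle : (⊤ : Submodule ℂ V) ≤ ⨆ χ ∈ S', ⨅ i, (Y i).maxGenEigenspace (χ i) := by
    refine hS.trans (iSup₂_le fun χ hχ => ?_)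
    by_cases hbot : (⨅ i, (Y i).maxGenEigenspace (χ i)) = ⊥
    · rw [hbot]; exact bot_le
    · exact le_iSup₂ (f := fun (χ : Fin κ → ℂ) (_ : χ ∈ S') => ⨅ i, (Y i).maxGenEigenspace (χ i))
        χ (Finset.mem_filter.mpr ⟨hχ, hbot⟩)
  have hS'ne : ∀ χ ∈ S', ∃ k, χ k ≠ 0 := by
    intro χ hχ
    by_contra hno
    push_neg at hno
    have hchi : χ = 0 := funext hno
    rw [hS'def, Finset.mem_filter] at hχ
    exact hχ.2 (by rw [hchi]; exact hV0)
  obtain ⟨a, hacomm, havan⟩ := glue S' hS'ne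
  refine ⟨a, hacomm, ?_⟩
  have hker : (⊤ : Submodule ℂ V) ≤ LinearMap.ker ((1 : Module.End ℂ V) - ∑ k, a k * Y k) := by
    refine hSle.trans (iSup₂_le fun χ hχ => ?_)
    intro v hv
    exact LinearMap.mem_ker.mpr (havan χ hχ v hv)
  have hzero : (1 : Module.End ℂ V) - ∑ k, a k * Y k = 0 := by
    apply LinearMap.ext; intro v
    rw [LinearMap.zero_apply]
    exact LinearMap.mem_ker.mp (hker Submodule.mem_top)
  exact (sub_eq_zero.mp hzero).symm

end TaylorAux


/-- Let `V` be a finite-dimensional complex vector space and `X₁,…,X_κ`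
pairwise commuting linear maps on `V`.  For every `λ ∈ ℂ^κ` the following are equivalent:
(a) `λ` is a joint eigenvalue of `(X₁,…,X_κ)`, i.e. there is `v ≠ 0` with `X_k v = λ_k v`
for all `k`; (b) the Koszul complex of `(X₁−λ₁,…,X_κ−λ_κ)` fails to be exact, i.e.
`ker d_{X−λ} ≠ ran d_{X−λ}` inside `V ⊗ ⋀(ℂ^κ)`.  In other words, the Taylor spectrum of
the commuting tuple `(X₁,…,X_κ)` on `V` is exactly the set of its joint eigenvalues. -/
theorem taylor_spectrum_eq_joint_eigenvalues_finDim
    {κ : ℕ} {V : Type*} [AddCommGroup V] [Module ℂ V] [FiniteDimensional ℂ V]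
    (X : Fin κ → Module.End ℂ V)
    (hcomm : ∀ i j, X i * X j = X j * X i)
    (lam : Fin κ → ℂ) :
    (∃ v : V, v ≠ 0 ∧ ∀ k, X k v = lam k • v) ↔
      LinearMap.ker (koszulD (fun k => X k - lam k • 1))
        ≠ LinearMap.range (koszulD (fun k => X k - lam k • 1)) := by
  classical
  set Y : Fin κ → Module.End ℂ V := fun k => X k - lam k • 1 with hY
  have hcY : ∀ i j, Commute (Y i) (Y j) := by
    intro i j
    have h : Commute (X i) (X j) := hcomm i j
    have h1 : Commute (X i) (X j - lam j • 1) :=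
      h.sub_right ((Commute.one_right (X i)).smul_right (lam j))
    exact h1.sub_left ((Commute.one_left (X j - lam j • 1)).smul_left (lam i))
  have heig : ∀ (v : V) (k : Fin κ), Y k v = X k v - lam k • v := by
    intro v k
    simp [hY, LinearMap.sub_apply, LinearMap.smul_apply, Module.End.one_apply]
  constructor
  · rintro ⟨v, hv, hev⟩ heq
    have hYv : ∀ k, Y k v = 0 := fun k => by rw [heig, hev k, sub_self]
    have hker : koszulD Y (v ⊗ₜ[ℂ] (1 : ExteriorAlgebra ℂ (Fin κ → ℂ))) = 0 := by
      rw [TaylorAux.koszulD_tmul]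
      refine Finset.sum_eq_zero fun k _ => ?_
      rw [hYv k, TensorProduct.zero_tmul]
    have hmem : v ⊗ₜ[ℂ] (1 : ExteriorAlgebra ℂ (Fin κ → ℂ)) ∈
        LinearMap.range (koszulD Y) := heq ▸ LinearMap.mem_ker.mpr hker
    obtain ⟨y, hy⟩ := hmem
    set F : VLambda κ V →ₗ[ℂ] V :=
      (TensorProduct.rid ℂ V).toLinearMap ∘ₗ
        TensorProduct.map (LinearMap.id)
          (ExteriorAlgebra.algebraMapInv (M := Fin κ → ℂ)).toLinearMap with hF
    have hFd : ∀ z, F (koszulD Y z) = 0 := by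
      suffices h : F ∘ₗ koszulD Y = 0 by intro z; exact DFunLike.congr_fun h z
      apply TensorProduct.ext'
      intro u ω
      simp only [LinearMap.comp_apply, LinearMap.zero_apply]
      rw [TaylorAux.koszulD_tmul, map_sum]
      refine Finset.sum_eq_zero fun k _ => ?_
      rw [hF]
      simp only [LinearMap.comp_apply, TensorProduct.map_tmul, LinearMap.id_coe, id_eq,
        AlgHom.toLinearMap_apply]
      rw [map_mul]
      have hzero : ExteriorAlgebra.algebraMapInv (R := ℂ) (M := Fin κ → ℂ)
          (ExteriorAlgebra.ι ℂ (Pi.single k (1:ℂ))) = (0 : ℂ) := by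
        simp [ExteriorAlgebra.algebraMapInv]
      rw [hzero, zero_mul, TensorProduct.tmul_zero, map_zero]
    have hFx : F (v ⊗ₜ[ℂ] (1 : ExteriorAlgebra ℂ (Fin κ → ℂ))) = v := by
      rw [hF]
      simp
    apply hv
    rw [← hFx, ← hy]
    exact hFd y
  · intro hne
    by_contra hno
    apply hne
    obtain ⟨a, hacomm, hasum⟩ := TaylorAux.exists_combo Y hcY (by
      rintro ⟨v, hv0, hvk⟩
      exact hno ⟨v, hv0, fun k => by
        have := hvk k
        rw [heig, sub_eq_zero] at this
        exact this⟩)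
    exact TaylorAux.ker_eq_range Y a hcY hacomm hasum
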